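/- Subadditivity of mutual information under conditional independence: let X, Y, Z be random variables taking values in finite sets. If X and Y are conditionally independent given Z (i.e., P(X=x, Y=y | Z=z) = P(X=x|Z=z)·P(Y=y|Z=z) whenever P(Z=z) ≠ 0), then I((X,Y); Z) ≤ I(X;Z) + I(Y;Z). -/
import Mathlib


open Finset

/-- Shannon entropy (base 2) of a probability mass function on a finite set,
with the convention `0·log 0 = 0` (note `Real.logb 2 0 = 0`). -/
noncomputable def shannonEntropy {α : Type*} [Fintype α] (p : α → ℝ) : ℝ :=
  -∑ a, p a * Real.logb 2 (p a)

/-- Mutual information `I(X;Y) = H(X) + H(Y) − H(X,Y)` of a joint pmf on a product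
of finite sets. -/
noncomputable def mutualInfoFin {α β : Type*} [Fintype α] [Fintype β]
    (p : α × β → ℝ) : ℝ :=
  shannonEntropy (fun a => ∑ b, p (a, b)) + shannonEntropy (fun b => ∑ a, p (a, b)) -
    shannonEntropy p

lemma gibbs_log {ι : Type*} [Fintype ι] (f g : ι → ℝ) (hf : ∀ i, 0 ≤ f i)
    (hg : ∀ i, 0 ≤ g i) (hfg : ∀ i, f i ≠ 0 → g i ≠ 0)
    (hsum : ∑ i, g i ≤ ∑ i, f i) :
    ∑ i, f i * Real.log (g i) ≤ ∑ i, f i * Real.log (f i) := by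
  have key : ∀ i, f i * Real.log (g i) - f i * Real.log (f i) ≤ g i - f i := by
    intro i
    rcases eq_or_ne (f i) 0 with h | h
    · simp [h, hg i]
    · have hfp : 0 < f i := (hf i).lt_of_ne' h
      have hgp : 0 < g i := (hg i).lt_of_ne' (hfg i h)
      have h1 := Real.log_le_sub_one_of_pos (show (0:ℝ) < g i / f i from div_pos hgp hfp)
      rw [Real.log_div (ne_of_gt hgp) (ne_of_gt hfp)] at h1
      have h2 := mul_le_mul_of_nonneg_left h1 hfp.le
      have h3 : f i * (g i / f i - 1) = g i - f i := by field_simp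
      rw [h3, mul_sub] at h2
      linarith
  have h4 : ∑ i, (f i * Real.log (g i) - f i * Real.log (f i)) ≤ ∑ i, (g i - f i) :=
    Finset.sum_le_sum fun i _ => key i
  rw [Finset.sum_sub_distrib, Finset.sum_sub_distrib] at h4
  linarith

lemma gibbs_logb {ι : Type*} [Fintype ι] (f g : ι → ℝ) (hf : ∀ i, 0 ≤ f i)
    (hg : ∀ i, 0 ≤ g i) (hfg : ∀ i, f i ≠ 0 → g i ≠ 0)
    (hsum : ∑ i, g i ≤ ∑ i, f i) :
    ∑ i, f i * Real.logb 2 (g i) ≤ ∑ i, f i * Real.logb 2 (f i) := by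
  have h := gibbs_log f g hf hg hfg hsum
  have e : ∀ h' : ι → ℝ, ∑ i, f i * Real.logb 2 (h' i)
      = (∑ i, f i * Real.log (h' i)) / Real.log 2 := by
    intro h'
    rw [Finset.sum_div]
    exact Finset.sum_congr rfl fun i _ => by rw [Real.logb, mul_div_assoc]
  rw [e f, e g]
  gcongr

lemma entropy_subadd {α β : Type*} [Fintype α] [Fintype β] (q : α × β → ℝ)
    (h0 : ∀ ab, 0 ≤ q ab) (h1 : ∑ ab, q ab = 1) :
    shannonEntropy q ≤ shannonEntropy (fun a => ∑ b, q (a, b))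
      + shannonEntropy (fun b => ∑ a, q (a, b)) := by
  set qA : α → ℝ := fun a => ∑ b, q (a, b) with hqA
  set qB : β → ℝ := fun b => ∑ a, q (a, b) with hqB
  have hqA0 : ∀ a, 0 ≤ qA a := fun a => Finset.sum_nonneg fun b _ => h0 _
  have hqB0 : ∀ b, 0 ≤ qB b := fun b => Finset.sum_nonneg fun a _ => h0 _
  have hA1 : ∑ a, qA a = 1 := by
    rw [← h1, Fintype.sum_prod_type]
  have hB1 : ∑ b, qB b = 1 := by
    rw [← h1, Fintype.sum_prod_type]
    exact Finset.sum_comm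
  have hg := gibbs_logb q (fun ab => qA ab.1 * qB ab.2) h0
    (fun ab => mul_nonneg (hqA0 _) (hqB0 _))
    (fun ab hne => by
      obtain ⟨a, b⟩ := ab
      have h1a : q (a, b) ≤ qA a :=
        Finset.single_le_sum (f := fun b' => q (a, b')) (fun b' _ => h0 _) (Finset.mem_univ b)
      have h1b : q (a, b) ≤ qB b :=
        Finset.single_le_sum (f := fun a' => q (a', b)) (fun a' _ => h0 _) (Finset.mem_univ a)
      have hq : 0 < q (a, b) := (h0 _).lt_of_ne' hne
      exact mul_ne_zero (ne_of_gt (lt_of_lt_of_le hq h1a)) (ne_of_gt (lt_of_lt_of_le hq h1b)))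
    (by
      rw [Fintype.sum_prod_type]
      have : ∑ a, ∑ b, qA a * qB b = ∑ a, qA a * ∑ b, qB b := by
        exact Finset.sum_congr rfl fun a _ => (Finset.mul_sum _ _ _).symm
      rw [this, hB1]
      simp [hA1, h1])
  have hsplit : ∑ ab : α × β, q ab * Real.logb 2 (qA ab.1 * qB ab.2)
      = ∑ a, qA a * Real.logb 2 (qA a) + ∑ b, qB b * Real.logb 2 (qB b) := by
    have e1 : ∑ ab : α × β, q ab * Real.logb 2 (qA ab.1 * qB ab.2)
        = ∑ ab : α × β, (q ab * Real.logb 2 (qA ab.1) + q ab * Real.logb 2 (qB ab.2)) := by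
      refine Finset.sum_congr rfl ?_
      rintro ⟨a, b⟩ -
      rcases eq_or_ne (q (a, b)) 0 with h | h
      · simp [h]
      · have h1a : q (a, b) ≤ qA a :=
          Finset.single_le_sum (f := fun b' => q (a, b')) (fun b' _ => h0 _) (Finset.mem_univ b)
        have h1b : q (a, b) ≤ qB b :=
          Finset.single_le_sum (f := fun a' => q (a', b)) (fun a' _ => h0 _) (Finset.mem_univ a)
        have hq : 0 < q (a, b) := (h0 _).lt_of_ne' h
        rw [Real.logb_mul (ne_of_gt (lt_of_lt_of_le hq h1a)) (ne_of_gt (lt_of_lt_of_le hq h1b)), mul_add]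
    rw [e1, Finset.sum_add_distrib]
    congr 1
    · rw [Fintype.sum_prod_type]
      refine Finset.sum_congr rfl fun a _ => ?_
      simp only
      rw [← Finset.sum_mul]
    · rw [Fintype.sum_prod_type_right]
      refine Finset.sum_congr rfl fun b _ => ?_
      simp only
      rw [← Finset.sum_mul]
  rw [hsplit] at hg
  unfold shannonEntropy
  linarith

/-- subadditivity of mutual information under conditional independence:
if `X` and `Y` are conditionally independent given `Z`, then
`I((X,Y);Z) ≤ I(X;Z) + I(Y;Z)`.  Here `p` is the joint pmf of `(X,Y,Z)`, and
conditional independence is expressed (whenever `P(Z=z) ≠ 0`) as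
`P(X=x,Y=y,Z=z)·P(Z=z) = P(X=x,Z=z)·P(Y=y,Z=z)`. -/
theorem statement3 {𝒳 𝒴 𝒵 : Type*} [Fintype 𝒳] [Fintype 𝒴] [Fintype 𝒵]
    (p : 𝒳 × 𝒴 × 𝒵 → ℝ) (hp0 : ∀ q, 0 ≤ p q) (hp1 : ∑ q, p q = 1)
    (hci : ∀ x y z, (∑ x', ∑ y', p (x', y', z)) ≠ 0 →
      p (x, y, z) * (∑ x', ∑ y', p (x', y', z)) =
        (∑ y', p (x, y', z)) * (∑ x', p (x', y, z))) :
    mutualInfoFin (fun q : (𝒳 × 𝒴) × 𝒵 => p (q.1.1, q.1.2, q.2)) ≤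
      mutualInfoFin (fun q : 𝒳 × 𝒵 => ∑ y, p (q.1, y, q.2)) +
        mutualInfoFin (fun q : 𝒴 × 𝒵 => ∑ x, p (x, q.1, q.2)) := by
  have hp1' : ∑ x, ∑ y, ∑ z, p (x, y, z) = 1 := by
    rw [← hp1]
    simp only [Fintype.sum_prod_type]
  -- the chain identity under conditional independence
  have hterm : ∀ x y z, p (x, y, z) * Real.logb 2 (p (x, y, z))
      = p (x, y, z) * Real.logb 2 (∑ y', p (x, y', z))
        + p (x, y, z) * Real.logb 2 (∑ x', p (x', y, z))
        - p (x, y, z) * Real.logb 2 (∑ x', ∑ y', p (x', y', z)) := by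
    intro x y z
    rcases eq_or_ne (p (x, y, z)) 0 with h | h
    · simp [h]
    · have hp : 0 < p (x, y, z) := (hp0 _).lt_of_ne' h
      have hle1 : p (x, y, z) ≤ ∑ y', p (x, y', z) :=
        Finset.single_le_sum (f := fun y' => p (x, y', z)) (fun _ _ => hp0 _)
          (Finset.mem_univ y)
      have hle2 : p (x, y, z) ≤ ∑ x', p (x', y, z) :=
        Finset.single_le_sum (f := fun x' => p (x', y, z)) (fun _ _ => hp0 _)
          (Finset.mem_univ x)
      have hle3 : (∑ y', p (x, y', z)) ≤ ∑ x', ∑ y', p (x', y', z) :=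
        Finset.single_le_sum (f := fun x' => ∑ y', p (x', y', z))
          (fun x' _ => Finset.sum_nonneg fun _ _ => hp0 _) (Finset.mem_univ x)
      have h1 : 0 < ∑ y', p (x, y', z) := lt_of_lt_of_le hp hle1
      have h2 : 0 < ∑ x', p (x', y, z) := lt_of_lt_of_le hp hle2
      have h3 : 0 < ∑ x', ∑ y', p (x', y', z) := lt_of_lt_of_le h1 hle3
      have hc := hci x y z (ne_of_gt h3)
      have hpeq : p (x, y, z)
          = (∑ y', p (x, y', z)) * (∑ x', p (x', y, z)) / (∑ x', ∑ y', p (x', y', z)) :=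
        eq_div_of_mul_eq (ne_of_gt h3) hc
      have hlog : Real.logb 2 (p (x, y, z))
          = Real.logb 2 (∑ y', p (x, y', z)) + Real.logb 2 (∑ x', p (x', y, z))
            - Real.logb 2 (∑ x', ∑ y', p (x', y', z)) := by
        rw [hpeq, Real.logb_div (mul_ne_zero (ne_of_gt h1) (ne_of_gt h2)) (ne_of_gt h3),
          Real.logb_mul (ne_of_gt h1) (ne_of_gt h2)]
      rw [hlog]; ring
  have hM : ∑ x, ∑ y, ∑ z, p (x, y, z) * Real.logb 2 (p (x, y, z))
      = (∑ x, ∑ z, (∑ y, p (x, y, z)) * Real.logb 2 (∑ y, p (x, y, z)))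
        + (∑ y, ∑ z, (∑ x, p (x, y, z)) * Real.logb 2 (∑ x, p (x, y, z)))
        - (∑ z, (∑ x, ∑ y, p (x, y, z)) * Real.logb 2 (∑ x, ∑ y, p (x, y, z))) := by
    have e0 : ∑ x, ∑ y, ∑ z, p (x, y, z) * Real.logb 2 (p (x, y, z))
        = (∑ x, ∑ y, ∑ z, p (x, y, z) * Real.logb 2 (∑ y', p (x, y', z)))
          + (∑ x, ∑ y, ∑ z, p (x, y, z) * Real.logb 2 (∑ x', p (x', y, z)))
          - (∑ x, ∑ y, ∑ z, p (x, y, z) * Real.logb 2 (∑ x', ∑ y', p (x', y', z))) := by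
      rw [← Finset.sum_add_distrib, ← Finset.sum_sub_distrib]
      refine Finset.sum_congr rfl fun x _ => ?_
      rw [← Finset.sum_add_distrib, ← Finset.sum_sub_distrib]
      refine Finset.sum_congr rfl fun y _ => ?_
      rw [← Finset.sum_add_distrib, ← Finset.sum_sub_distrib]
      exact Finset.sum_congr rfl fun z _ => hterm x y z
    have eA : ∑ x, ∑ y, ∑ z, p (x, y, z) * Real.logb 2 (∑ y', p (x, y', z))
        = ∑ x, ∑ z, (∑ y, p (x, y, z)) * Real.logb 2 (∑ y, p (x, y, z)) := by
      refine Finset.sum_congr rfl fun x _ => ?_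
      rw [Finset.sum_comm]
      refine Finset.sum_congr rfl fun z _ => ?_
      rw [← Finset.sum_mul]
    have eB : ∑ x, ∑ y, ∑ z, p (x, y, z) * Real.logb 2 (∑ x', p (x', y, z))
        = ∑ y, ∑ z, (∑ x, p (x, y, z)) * Real.logb 2 (∑ x, p (x, y, z)) := by
      rw [Finset.sum_comm]
      refine Finset.sum_congr rfl fun y _ => ?_
      rw [Finset.sum_comm]
      refine Finset.sum_congr rfl fun z _ => ?_
      rw [← Finset.sum_mul]
    have eC : ∑ x, ∑ y, ∑ z, p (x, y, z) * Real.logb 2 (∑ x', ∑ y', p (x', y', z))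
        = ∑ z, (∑ x, ∑ y, p (x, y, z)) * Real.logb 2 (∑ x, ∑ y, p (x, y, z)) := by
      have step1 : ∑ x, ∑ y, ∑ z, p (x, y, z) * Real.logb 2 (∑ x', ∑ y', p (x', y', z))
          = ∑ x, ∑ z, (∑ y, p (x, y, z)) * Real.logb 2 (∑ x', ∑ y', p (x', y', z)) := by
        refine Finset.sum_congr rfl fun x _ => ?_
        rw [Finset.sum_comm]
        refine Finset.sum_congr rfl fun z _ => ?_
        rw [← Finset.sum_mul]
      rw [step1, Finset.sum_comm]
      refine Finset.sum_congr rfl fun z _ => ?_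
      rw [← Finset.sum_mul]
    rw [e0, eA, eB, eC]
  simp only [mutualInfoFin]
  have h25 : shannonEntropy (fun b : 𝒵 => ∑ a : 𝒳 × 𝒴, p (a.1, a.2, b))
      = shannonEntropy (fun z : 𝒵 => ∑ x, ∑ y, p (x, y, z)) := by
    simp only [shannonEntropy, Fintype.sum_prod_type]
  have h85 : shannonEntropy (fun z : 𝒵 => ∑ y, ∑ x, p (x, y, z))
      = shannonEntropy (fun z : 𝒵 => ∑ x, ∑ y, p (x, y, z)) := by
    have e : ∀ z : 𝒵, ∑ y, ∑ x, p (x, y, z) = ∑ x, ∑ y, p (x, y, z) :=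
      fun z => Finset.sum_comm
    simp only [shannonEntropy, e]
  have hF3 : shannonEntropy (fun q : (𝒳 × 𝒴) × 𝒵 => p (q.1.1, q.1.2, q.2))
      = shannonEntropy (fun q : 𝒳 × 𝒵 => ∑ y, p (q.1, y, q.2))
        + shannonEntropy (fun q : 𝒴 × 𝒵 => ∑ x, p (x, q.1, q.2))
        - shannonEntropy (fun z : 𝒵 => ∑ x, ∑ y, p (x, y, z)) := by
    simp only [shannonEntropy, Fintype.sum_prod_type]
    rw [hM]; ring
  have hF4 : shannonEntropy (fun a : 𝒳 × 𝒴 => ∑ z, p (a.1, a.2, z))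
      ≤ shannonEntropy (fun x : 𝒳 => ∑ z, ∑ y, p (x, y, z))
        + shannonEntropy (fun y : 𝒴 => ∑ z, ∑ x, p (x, y, z)) := by
    have hs := entropy_subadd (fun ab : 𝒳 × 𝒴 => ∑ z, p (ab.1, ab.2, z))
      (fun ab => Finset.sum_nonneg fun _ _ => hp0 _)
      (by
        rw [Fintype.sum_prod_type]
        exact hp1')
    have e1 : (fun a : 𝒳 => ∑ b : 𝒴, ∑ z, p ((a, b).1, (a, b).2, z))
        = fun x : 𝒳 => ∑ z, ∑ y, p (x, y, z) := by
      funext x; exact Finset.sum_comm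
    have e2 : (fun b : 𝒴 => ∑ a : 𝒳, ∑ z, p ((a, b).1, (a, b).2, z))
        = fun y : 𝒴 => ∑ z, ∑ x, p (x, y, z) := by
      funext y; exact Finset.sum_comm
    simpa only [e1, e2] using hs
  linarith
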